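/- arXiv:1101.3501 — 4 statements merged into one kernel-verified Lean document; each statement's English description precedes it below -/
import Mathlib

section
/- Let K satisfy the standing kernel assumptions, let S ⊆ ℝ^d, and let θ', θ ∈ ℝ_{>0}^d with θ'_i ≤ θ_i for all i. If f : S → ℝ has ‖f‖_{H_θ(S)} < ∞, then ‖f‖_{H_{θ'}(S)} < ∞ and ‖f‖²_{H_{θ'}(S)} ≤ (∏_{i=1}^d θ_i/θ'_i) · ‖f‖²_{H_θ(S)}. -/
open MeasureTheory Matrix Filter
open scoped FourierTransform ENNReal NNReal Topology

noncomputable section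

abbrev Rd (d : ℕ) := EuclideanSpace ℝ (Fin d)

namespace EIPaper

variable {d : ℕ}

/-- Build a point of `ℝ^d` from coordinates. -/
def toRd (f : Fin d → ℝ) : Rd d := (WithLp.equiv 2 (Fin d → ℝ)).symm f

/-- The Fourier transform of a real-valued function on `ℝ^d`. -/
def FT (g : Rd d → ℝ) : Rd d → ℂ := 𝓕 (fun x => (g x : ℂ))

/-- The rescaled kernel `K_θ`. -/
def Kscale (K : Rd d → ℝ) (θ : Fin d → ℝ) (t : Rd d) : ℝ := K (toRd fun i => t i / θ i)

/-- The Fourier transform `K̂_θ` of the rescaled kernel. -/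
def KhatScale (Khat : Rd d → ℝ) (θ : Fin d → ℝ) (ξ : Rd d) : ℝ :=
  (∏ i, θ i) * Khat (toRd fun i => θ i * ξ i)

/-- Standing assumptions on the kernel `K` and its Fourier transform `Khat`. -/
structure StandingKernel (K Khat : Rd d → ℝ) : Prop where
  cont : Continuous K
  integ : Integrable K
  symm : ∀ x, K (-x) = K x
  posdef : ∀ {n : ℕ} (xs : Fin n → Rd d), Function.Injective xs →
    (Matrix.of fun i j => K (xs i - xs j)).PosDef
  k0 : K 0 = 1
  ft : ∀ ξ, FT K ξ = (Khat ξ : ℂ)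
  khat_nonneg : ∀ ξ, 0 ≤ Khat ξ
  khat_integ : Integrable Khat
  radial : ∃ kh : ℝ → ℝ, (∀ ξ, Khat ξ = kh ‖ξ‖) ∧
    ∀ ⦃a b : ℝ⦄, 0 ≤ a → a ≤ b → kh b ≤ kh a

/-- `K̂(ξ) = Θ(‖ξ‖^{-2ν-d})` as `‖ξ‖ → ∞`. -/
def DecayTheta (Khat : Rd d → ℝ) (ν : ℝ) : Prop :=
  ∃ c C M : ℝ, 0 < c ∧ 0 < C ∧ ∀ ξ : Rd d, M ≤ ‖ξ‖ →
    c * ‖ξ‖ ^ (-(2 * ν + d)) ≤ Khat ξ ∧ Khat ξ ≤ C * ‖ξ‖ ^ (-(2 * ν + d))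

/-- `K̂(ξ) = O(‖ξ‖^{-2s-d})` as `‖ξ‖ → ∞`, for every `s > 0` (the case `ν = ∞`). -/
def DecayAll (Khat : Rd d → ℝ) : Prop :=
  ∀ s : ℝ, 0 < s → ∃ C M : ℝ, ∀ ξ : Rd d, M ≤ ‖ξ‖ → Khat ξ ≤ C * ‖ξ‖ ^ (-(2 * s + d))

/-- The `k`-th order Taylor polynomial of `K` at the origin. -/
def taylorAt0 (K : Rd d → ℝ) (k : ℕ) (x : Rd d) : ℝ :=
  ∑ j ∈ Finset.range (k + 1), ((j.factorial : ℝ))⁻¹ * iteratedFDeriv ℝ j K 0 (fun _ => x)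

/-- Local smoothness assumption: `K` is `C^k` for `k` the largest integer less than `2ν`, and
its Taylor remainder at `0` is `O(‖x‖^{2ν}(-log ‖x‖)^{2α})`. -/
def LocalSmooth (K : Rd d → ℝ) (ν α : ℝ) : Prop :=
  ContDiff ℝ (⌈2 * ν⌉₊ - 1 : ℕ) K ∧
  ∃ C ε : ℝ, 0 < ε ∧ ε < 1 ∧ ∀ x : Rd d, ‖x‖ ≤ ε →
    |K x - taylorAt0 K (⌈2 * ν⌉₊ - 1) x| ≤ C * ‖x‖ ^ (2 * ν) * (-Real.log ‖x‖) ^ (2 * α)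

/-- Combined decay and local smoothness assumptions with parameter `ν ∈ (0,∞]`. -/
def SmoothnessAssumptions (K Khat : Rd d → ℝ) (ν : ℝ≥0∞) (α : ℝ) : Prop :=
  (ν ≠ ⊤ → DecayTheta Khat ν.toReal ∧ LocalSmooth K ν.toReal α) ∧
  (ν = ⊤ → DecayAll Khat ∧ ContDiff ℝ (⊤ : ℕ∞) K ∧ α = 0)

/-- The squared RKHS norm of `g` on `ℝ^d`: `∫ |ĝ(ξ)|² / K̂_θ(ξ) dξ`, valued in `[0,∞]`
(in `ℝ≥0∞`, `a / 0 = ∞` for `a ≠ 0` and `0 / 0 = 0`). -/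
def Hnorm2 (Khat : Rd d → ℝ) (θ : Fin d → ℝ) (g : Rd d → ℝ) : ℝ≥0∞ :=
  ∫⁻ ξ, (‖FT g ξ‖₊ : ℝ≥0∞) ^ 2 / ENNReal.ofReal (KhatScale Khat θ ξ)

/-- The squared RKHS norm of `f` on `S ⊆ ℝ^d`: the infimum of `Hnorm2` over all real
continuous `L²` extensions of `f`. -/
def HnormOn2 (Khat : Rd d → ℝ) (θ : Fin d → ℝ) (S : Set (Rd d)) (f : Rd d → ℝ) : ℝ≥0∞ :=
  ⨅ (g : Rd d → ℝ) (_ : Continuous g ∧ MemLp g 2 volume ∧ Set.EqOn g f S),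
    Hnorm2 Khat θ g

variable (K : Rd d → ℝ)

/-- The kernel matrix `V = (K_θ(x_i - x_j))`. -/
def kerMat (θ : Fin d → ℝ) {n : ℕ} (xs : Fin n → Rd d) : Matrix (Fin n) (Fin n) ℝ :=
  Matrix.of fun i j => Kscale K θ (xs i - xs j)

/-- The vector `v(y) = (K_θ(y - x_i))`. -/
def kerVec (θ : Fin d → ℝ) {n : ℕ} (xs : Fin n → Rd d) (y : Rd d) : Fin n → ℝ :=
  fun i => Kscale K θ (y - xs i)

/-- The estimated global mean `μ̂_n(θ) = 1ᵀV⁻¹z / 1ᵀV⁻¹1`. -/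
def muHat (θ : Fin d → ℝ) {n : ℕ} (xs : Fin n → Rd d) (z : Fin n → ℝ) : ℝ :=
  ((1 : Fin n → ℝ) ⬝ᵥ ((kerMat K θ xs)⁻¹ *ᵥ z)) /
    ((1 : Fin n → ℝ) ⬝ᵥ ((kerMat K θ xs)⁻¹ *ᵥ (1 : Fin n → ℝ)))

/-- The kriging predictor `f̂_n(y; θ)`. -/
def fHat (θ : Fin d → ℝ) {n : ℕ} (xs : Fin n → Rd d) (z : Fin n → ℝ) (y : Rd d) : ℝ :=
  muHat K θ xs z +
    kerVec K θ xs y ⬝ᵥ ((kerMat K θ xs)⁻¹ *ᵥ (z - muHat K θ xs z • (1 : Fin n → ℝ)))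

/-- The kriging variance `s_n²(y; θ)`. -/
def s2 (θ : Fin d → ℝ) {n : ℕ} (xs : Fin n → Rd d) (y : Rd d) : ℝ :=
  1 - kerVec K θ xs y ⬝ᵥ ((kerMat K θ xs)⁻¹ *ᵥ kerVec K θ xs y) +
    (1 - (1 : Fin n → ℝ) ⬝ᵥ ((kerMat K θ xs)⁻¹ *ᵥ kerVec K θ xs y)) ^ 2 /
      ((1 : Fin n → ℝ) ⬝ᵥ ((kerMat K θ xs)⁻¹ *ᵥ (1 : Fin n → ℝ)))

/-- The kriging standard deviation `s_n(y; θ)`. -/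
def sn (θ : Fin d → ℝ) {n : ℕ} (xs : Fin n → Rd d) (y : Rd d) : ℝ :=
  Real.sqrt (s2 K θ xs y)

/-- The reduced sum of squares `R̂_n²(θ)`. -/
def Rhat2 (θ : Fin d → ℝ) {n : ℕ} (xs : Fin n → Rd d) (z : Fin n → ℝ) : ℝ :=
  (z - muHat K θ xs z • (1 : Fin n → ℝ)) ⬝ᵥ
    ((kerMat K θ xs)⁻¹ *ᵥ (z - muHat K θ xs z • (1 : Fin n → ℝ)))

/-- The best observed value `z_n^* = min_i z_i`. -/
def zstar {n : ℕ} (z : Fin n → ℝ) : ℝ := sInf (Set.range z)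

/-- The standard normal density. -/
def normalPDF (x : ℝ) : ℝ := (Real.sqrt (2 * Real.pi))⁻¹ * Real.exp (-(x ^ 2) / 2)

/-- The standard normal distribution function. -/
def normalCDF (x : ℝ) : ℝ := ∫ t in Set.Iic x, normalPDF t

/-- `τ(x) = xΦ(x) + φ(x)`. -/
def tau (x : ℝ) : ℝ := x * normalCDF x + normalPDF x

/-- `ρ(y, s) = yΦ(y/s) + sφ(y/s)` for `s > 0`, and `ρ(y, 0) = max(y, 0)`. -/
def rho (y s : ℝ) : ℝ :=
  if 0 < s then y * normalCDF (y / s) + s * normalPDF (y / s) else max y 0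

/-- The expected improvement at `y` with parameters `(σ, θ)`, built from design points `xs`
and observations `z`. -/
def EI (θ : Fin d → ℝ) (σ : ℝ) {n : ℕ} (xs : Fin n → Rd d) (z : Fin n → ℝ) (y : Rd d) : ℝ :=
  rho (zstar z - fHat K θ xs z y) (σ * sn K θ xs y)



section Statement6Aux

variable {d : ℕ}

private lemma toRd_norm_le (θ' θ ξ : Fin d → ℝ) (hθ' : ∀ i, 0 < θ' i)
    (hle : ∀ i, θ' i ≤ θ i) :
    ‖toRd (fun i => θ' i * ξ i)‖ ≤ ‖toRd (fun i => θ i * ξ i)‖ := by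
  rw [EuclideanSpace.norm_eq, EuclideanSpace.norm_eq]
  apply Real.sqrt_le_sqrt
  apply Finset.sum_le_sum
  intro i _
  have h1 : |θ' i * ξ i| ≤ |θ i * ξ i| := by
    rw [abs_mul, abs_mul]
    exact mul_le_mul_of_nonneg_right
      (by rw [abs_of_pos (hθ' i), abs_of_pos ((hθ' i).trans_le (hle i))]; exact hle i)
      (abs_nonneg _)
  simp only [toRd, WithLp.equiv_symm_apply, PiLp.toLp_apply, Real.norm_eq_abs]
  exact pow_le_pow_left₀ (abs_nonneg _) h1 2

private lemma khatScale_le (K Khat : Rd d → ℝ) (hK : StandingKernel K Khat)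
    (θ' θ : Fin d → ℝ) (hθ' : ∀ i, 0 < θ' i) (hθ : ∀ i, 0 < θ i)
    (hle : ∀ i, θ' i ≤ θ i) (ξ : Rd d) :
    KhatScale Khat θ ξ ≤ (∏ i, θ i / θ' i) * KhatScale Khat θ' ξ := by
  obtain ⟨kh, hkh, hmono⟩ := hK.radial
  have hKle : Khat (toRd fun i => θ i * ξ i) ≤ Khat (toRd fun i => θ' i * ξ i) := by
    rw [hkh, hkh]
    exact hmono (norm_nonneg _) (toRd_norm_le θ' θ (fun i => ξ i) hθ' hle)
  have hprod : (∏ i, θ i / θ' i) * (∏ i, θ' i) = ∏ i, θ i := by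
    rw [← Finset.prod_mul_distrib]
    exact Finset.prod_congr rfl fun i _ => div_mul_cancel₀ _ (hθ' i).ne'
  have hθpos : 0 ≤ ∏ i, θ i := Finset.prod_nonneg fun i _ => (hθ i).le
  calc KhatScale Khat θ ξ = (∏ i, θ i) * Khat (toRd fun i => θ i * ξ i) := rfl
    _ ≤ (∏ i, θ i) * Khat (toRd fun i => θ' i * ξ i) :=
        mul_le_mul_of_nonneg_left hKle hθpos
    _ = (∏ i, θ i / θ' i) * KhatScale Khat θ' ξ := by
        rw [KhatScale, ← hprod]; ring

private lemma pointwise_div_le {a : ℝ≥0∞} {x y c : ℝ} (hc : 0 < c) (hycx : y ≤ c * x) :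
    a / ENNReal.ofReal x ≤ ENNReal.ofReal c * (a / ENNReal.ofReal y) := by
  by_cases hy : y ≤ 0
  · by_cases ha : a = 0
    · simp [ha]
    · have h0 : ENNReal.ofReal y = 0 := by simpa using ENNReal.ofReal_eq_zero.mpr hy
      have hcne : ENNReal.ofReal c ≠ 0 := (ENNReal.ofReal_pos.mpr hc).ne'
      rw [h0, ENNReal.div_zero ha, ENNReal.mul_top hcne]
      exact le_top
  · push_neg at hy
    have hx : 0 < x := by nlinarith
    have hy0 : ENNReal.ofReal y ≠ 0 := (ENNReal.ofReal_pos.mpr hy).ne'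
    rw [ENNReal.div_le_iff (ENNReal.ofReal_pos.mpr hx).ne' ENNReal.ofReal_ne_top]
    calc a = a / ENNReal.ofReal y * ENNReal.ofReal y :=
          (ENNReal.div_mul_cancel hy0 ENNReal.ofReal_ne_top).symm
      _ ≤ a / ENNReal.ofReal y * (ENNReal.ofReal c * ENNReal.ofReal x) := by
          refine mul_le_mul_right ?_ _
          rw [← ENNReal.ofReal_mul hc.le]
          exact ENNReal.ofReal_le_ofReal hycx
      _ = ENNReal.ofReal c * (a / ENNReal.ofReal y) * ENNReal.ofReal x := by ring

private lemma hnorm2_le (K Khat : Rd d → ℝ) (hK : StandingKernel K Khat)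
    (θ' θ : Fin d → ℝ) (hθ' : ∀ i, 0 < θ' i) (hθ : ∀ i, 0 < θ i)
    (hle : ∀ i, θ' i ≤ θ i) (g : Rd d → ℝ) :
    Hnorm2 Khat θ' g ≤ ENNReal.ofReal (∏ i, θ i / θ' i) * Hnorm2 Khat θ g := by
  rw [Hnorm2, Hnorm2, ← lintegral_const_mul' _ _ ENNReal.ofReal_ne_top]
  refine lintegral_mono fun ξ => ?_
  exact pointwise_div_le (Finset.prod_pos fun i _ => div_pos (hθ i) (hθ' i))
    (khatScale_le K Khat hK θ' θ hθ' hθ hle ξ)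

end Statement6Aux

/-- Monotonicity of the RKHS norm in the length-scales: if `θ' ≤ θ`
componentwise then `‖f‖²_{H_{θ'}(S)} ≤ (∏ θᵢ/θ'ᵢ) ‖f‖²_{H_θ(S)}`. -/
theorem statement6 {d : ℕ} (hd : 0 < d) (K Khat : Rd d → ℝ) (hK : StandingKernel K Khat)
    (S : Set (Rd d)) (θ' θ : Fin d → ℝ) (hθ' : ∀ i, 0 < θ' i) (hθ : ∀ i, 0 < θ i)
    (hle : ∀ i, θ' i ≤ θ i) (f : Rd d → ℝ) (hf : HnormOn2 Khat θ S f ≠ ⊤) :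
    HnormOn2 Khat θ' S f ≠ ⊤ ∧
      HnormOn2 Khat θ' S f ≤ ENNReal.ofReal (∏ i, θ i / θ' i) * HnormOn2 Khat θ S f := by
  have hc : (0:ℝ) < ∏ i, θ i / θ' i := Finset.prod_pos fun i _ => div_pos (hθ i) (hθ' i)
  have hc0 : ENNReal.ofReal (∏ i, θ i / θ' i) ≠ 0 := (ENNReal.ofReal_pos.mpr hc).ne'
  have key : HnormOn2 Khat θ' S f ≤
      ENNReal.ofReal (∏ i, θ i / θ' i) * HnormOn2 Khat θ S f := by
    rw [HnormOn2, HnormOn2, ENNReal.mul_iInf_of_ne hc0 ENNReal.ofReal_ne_top]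
    refine iInf_mono fun g => ?_
    rw [ENNReal.mul_iInf_of_ne hc0 ENNReal.ofReal_ne_top]
    exact iInf_mono fun _ => hnorm2_le K Khat hK θ' θ hθ' hθ hle g
  exact ⟨ne_top_of_le_ne_top (ENNReal.mul_ne_top ENNReal.ofReal_ne_top hf) key, key⟩

end EIPaper
end
end

section
/- Let K satisfy the standing kernel assumptions, θ ∈ ℝ_{>0}^d, let x_1,…,x_{n+1} ∈ ℝ^d be pairwise distinct, and let z ∈ ℝ^{n+1}. Let R̂_n²(θ) be the reduced sum of squares formed from x_1,…,x_n and (z_1,…,z_n), and R̂_{n+1}²(θ) the one formed from x_1,…,x_{n+1} and (z_1,…,z_{n+1}). Then R̂_n²(θ) ≤ R̂_{n+1}²(θ); that is, R̂_n(θ) is non-decreasing in n. -/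
open MeasureTheory Matrix Filter
open scoped FourierTransform ENNReal NNReal Topology

noncomputable section

namespace EIPaper

variable {d : ℕ}

variable (K : Rd d → ℝ)

section Statement11Aux

lemma symm_dot' {m : ℕ} {A : Matrix (Fin m) (Fin m) ℝ} (hA : A.IsHermitian)
    (x y : Fin m → ℝ) : x ⬝ᵥ A *ᵥ y = y ⬝ᵥ A *ᵥ x := by
  have ht : Aᵀ = A := by
    ext i j
    simpa using congrFun (congrFun hA i) j
  rw [Matrix.dotProduct_mulVec, ← Matrix.mulVec_transpose, ht, dotProduct_comm]

lemma le_inv_quad' {m : ℕ} {A : Matrix (Fin m) (Fin m) ℝ} (hA : A.PosDef)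
    (w y : Fin m → ℝ) : 2 * (y ⬝ᵥ w) - y ⬝ᵥ A *ᵥ y ≤ w ⬝ᵥ A⁻¹ *ᵥ w := by
  have hinv : A *ᵥ (A⁻¹ *ᵥ w) = w := by
    rw [Matrix.mulVec_mulVec, Matrix.mul_nonsing_inv _ hA.det_pos.ne'.isUnit,
      Matrix.one_mulVec]
  have h0 := hA.posSemidef.dotProduct_mulVec_nonneg (y - A⁻¹ *ᵥ w)
  simp only [star_trivial] at h0
  have h1 : (A⁻¹ *ᵥ w) ⬝ᵥ (A *ᵥ y) = y ⬝ᵥ w := by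
    rw [symm_dot' hA.isHermitian, hinv]
  have h2 : (A⁻¹ *ᵥ w) ⬝ᵥ w = w ⬝ᵥ A⁻¹ *ᵥ w := dotProduct_comm _ _
  have hexp : (y - A⁻¹ *ᵥ w) ⬝ᵥ A *ᵥ (y - A⁻¹ *ᵥ w)
      = y ⬝ᵥ A *ᵥ y - 2 * (y ⬝ᵥ w) + w ⬝ᵥ A⁻¹ *ᵥ w := by
    rw [Matrix.mulVec_sub, hinv, sub_dotProduct, dotProduct_sub,
      dotProduct_sub, h1, h2]
    ring
  linarith [h0, hexp.symm.le, hexp.le]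

lemma restrict_le' {n : ℕ} {W : Matrix (Fin (n+1)) (Fin (n+1)) ℝ} (hW : W.PosDef)
    {V : Matrix (Fin n) (Fin n) ℝ} (hV : V.PosDef)
    (hsub : V = W.submatrix Fin.castSucc Fin.castSucc) (w : Fin (n+1) → ℝ) :
    (fun i => w i.castSucc) ⬝ᵥ V⁻¹ *ᵥ (fun i => w i.castSucc) ≤ w ⬝ᵥ W⁻¹ *ᵥ w := by
  set v : Fin n → ℝ := fun i => w i.castSucc with hv
  set y1 : Fin n → ℝ := V⁻¹ *ᵥ v with hy1
  set y : Fin (n+1) → ℝ := Fin.snoc y1 0 with hy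
  have hVy : V *ᵥ y1 = v := by
    rw [hy1, Matrix.mulVec_mulVec, Matrix.mul_nonsing_inv _ hV.det_pos.ne'.isUnit,
      Matrix.one_mulVec]
  have e1 : y ⬝ᵥ w = y1 ⬝ᵥ v := by
    simp [dotProduct, Fin.sum_univ_castSucc, hy, hv]
  have hrow : ∀ i : Fin n, (W *ᵥ y) i.castSucc = (V *ᵥ y1) i := by
    intro i
    simp [Matrix.mulVec, dotProduct, Fin.sum_univ_castSucc, hy, hsub]
  have e2 : y ⬝ᵥ W *ᵥ y = y1 ⬝ᵥ V *ᵥ y1 := by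
    rw [dotProduct, dotProduct, Fin.sum_univ_castSucc]
    simp only [hy, Fin.snoc_castSucc, Fin.snoc_last, zero_mul, add_zero]
    exact Finset.sum_congr rfl fun i _ => by rw [hrow i]
  have key := le_inv_quad' hW w y
  have ha : y1 ⬝ᵥ v = v ⬝ᵥ V⁻¹ *ᵥ v := dotProduct_comm _ _
  have heq : v ⬝ᵥ V⁻¹ *ᵥ v = 2 * (y ⬝ᵥ w) - y ⬝ᵥ W *ᵥ y := by
    rw [e1, e2, hVy, ha]; ring
  linarith [key, heq.le]

lemma mu_min' {m : ℕ} {B : Matrix (Fin m) (Fin m) ℝ} (hB : B.PosDef) (z : Fin m → ℝ) (μ : ℝ) :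
    (z - ((((1:Fin m → ℝ) ⬝ᵥ B *ᵥ z) / ((1:Fin m → ℝ) ⬝ᵥ B *ᵥ (1:Fin m → ℝ))) • (1:Fin m → ℝ)))
        ⬝ᵥ B *ᵥ (z - ((((1:Fin m → ℝ) ⬝ᵥ B *ᵥ z) / ((1:Fin m → ℝ) ⬝ᵥ B *ᵥ (1:Fin m → ℝ))) • (1:Fin m → ℝ)))
      ≤ (z - μ • (1:Fin m → ℝ)) ⬝ᵥ B *ᵥ (z - μ • (1:Fin m → ℝ)) := by
  rcases Nat.eq_zero_or_pos m with hm | hm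
  · subst hm
    simp [dotProduct]
  · set b : ℝ := (1:Fin m → ℝ) ⬝ᵥ B *ᵥ z with hb
    set c : ℝ := (1:Fin m → ℝ) ⬝ᵥ B *ᵥ (1:Fin m → ℝ) with hc
    have hone : (1 : Fin m → ℝ) ≠ 0 := by
      intro h
      have := congrFun h ⟨0, hm⟩
      simp at this
    have hcpos : 0 < c := by
      have := hB.dotProduct_mulVec_pos hone
      simpa [hc] using this
    have hsym : z ⬝ᵥ B *ᵥ (1:Fin m → ℝ) = b := symm_dot' hB.isHermitian z 1
    have hexp : ∀ ν : ℝ, (z - ν • (1:Fin m → ℝ)) ⬝ᵥ B *ᵥ (z - ν • (1:Fin m → ℝ))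
        = z ⬝ᵥ B *ᵥ z - 2 * ν * b + ν ^ 2 * c := by
      intro ν
      rw [Matrix.mulVec_sub, sub_dotProduct, dotProduct_sub,
        dotProduct_sub, Matrix.mulVec_smul, dotProduct_smul,
        smul_dotProduct, smul_dotProduct, smul_eq_mul, smul_eq_mul,
        smul_eq_mul, hsym, dotProduct_smul, smul_eq_mul]
      ring
    rw [hexp, hexp]
    have hbc : (b / c) * c = b := div_mul_cancel₀ b hcpos.ne'
    have h3 : μ * ((b / c) * c) = μ * b := by rw [hbc]
    have h4 : (b / c) * ((b / c) * c) = (b / c) * b := by rw [hbc]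
    nlinarith [mul_nonneg hcpos.le (sq_nonneg (μ - b / c)), h3, h4]

lemma kerMat_posDef' {d : ℕ} {K Khat : Rd d → ℝ} (hK : StandingKernel K Khat)
    {θ : Fin d → ℝ} (hθ : ∀ i, 0 < θ i) {m : ℕ} (xs : Fin m → Rd d)
    (hinj : Function.Injective xs) : (kerMat K θ xs).PosDef := by
  set ys : Fin m → Rd d := fun i => toRd fun k => xs i k / θ k with hys
  have hysinj : Function.Injective ys := by
    intro i j h
    apply hinj
    apply PiLp.ext
    intro k
    have hk : xs i k / θ k = xs j k / θ k := congrArg (fun v : Rd d => v k) h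
    have := (hθ k).ne'
    field_simp at hk
    exact hk
  have hmat : kerMat K θ xs = Matrix.of fun i j => K (ys i - ys j) := by
    ext i j
    simp only [kerMat, Kscale, Matrix.of_apply]
    congr 1
    apply PiLp.ext
    intro k
    simp [toRd, hys, PiLp.sub_apply, sub_div]
  rw [hmat]
  exact hK.posdef ys hysinj

end Statement11Aux

/-- The reduced sum of squares `R̂_n²(θ)` is non-decreasing in `n`. -/
theorem statement11 {d : ℕ} (hd : 0 < d) (K Khat : Rd d → ℝ) (hK : StandingKernel K Khat)
    (θ : Fin d → ℝ) (hθ : ∀ i, 0 < θ i)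
    {n : ℕ} (xs : Fin (n + 1) → Rd d) (hinj : Function.Injective xs) (z : Fin (n + 1) → ℝ) :
    Rhat2 K θ (fun i : Fin n => xs i.castSucc) (fun i : Fin n => z i.castSucc) ≤
      Rhat2 K θ xs z := by
  classical
  set xs' : Fin n → Rd d := fun i => xs i.castSucc with hxs'
  set z' : Fin n → ℝ := fun i => z i.castSucc with hz'
  have hinj' : Function.Injective xs' := fun i j h =>
    Fin.castSucc_injective n (hinj h)
  have hW : (kerMat K θ xs).PosDef := kerMat_posDef' hK hθ xs hinj
  have hV : (kerMat K θ xs').PosDef := kerMat_posDef' hK hθ xs' hinj'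
  set μ := muHat K θ xs z with hμ
  have step1 : Rhat2 K θ xs' z' ≤
      (z' - μ • (1 : Fin n → ℝ)) ⬝ᵥ (kerMat K θ xs')⁻¹ *ᵥ (z' - μ • (1 : Fin n → ℝ)) :=
    mu_min' hV.inv z' μ
  have hsub : kerMat K θ xs' = (kerMat K θ xs).submatrix Fin.castSucc Fin.castSucc := rfl
  have hw : (fun i : Fin n => (z - μ • (1 : Fin (n+1) → ℝ)) i.castSucc)
      = z' - μ • (1 : Fin n → ℝ) := by
    funext i
    simp [hz']
  have step2 := restrict_le' hW hV hsub (z - μ • (1 : Fin (n+1) → ℝ))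
  rw [hw] at step2
  exact le_trans step1 step2

end EIPaper
end
end

section
/- Let Φ and φ denote the standard normal distribution and density functions and τ(x) = xΦ(x) + φ(x). Let R > 0, σ > 0, s ≥ 0, and t, u ∈ ℝ with |u − t| ≤ R. Set I = s·max(t,0), and set EI = σ s τ(u/σ) if s > 0 and EI = I if s = 0. Then max(I − Rs, (τ(−R/σ)/τ(R/σ)) · I) ≤ EI ≤ I + (R + σ)s. -/
open MeasureTheory Matrix Filter
open scoped FourierTransform ENNReal NNReal Topology

noncomputable section

namespace EIPaper

variable {d : ℕ}

variable (K : Rd d → ℝ)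

section AuxTau
open Set Filter MeasureTheory

lemma normalPDF_eq (x : ℝ) : normalPDF x = (Real.sqrt (2 * Real.pi))⁻¹ * Real.exp (-(1/2) * x ^ 2) := by
  unfold normalPDF; ring_nf

lemma normalPDF_pos (x : ℝ) : 0 < normalPDF x := by
  unfold normalPDF
  positivity

lemma normalPDF_nonneg (x : ℝ) : 0 ≤ normalPDF x := (normalPDF_pos x).le

lemma integrable_normalPDF : Integrable normalPDF := by
  have : Integrable (fun x : ℝ => Real.exp (-(1/2) * x ^ 2)) := integrable_exp_neg_mul_sq (by norm_num)
  have h2 := this.const_mul ((Real.sqrt (2 * Real.pi))⁻¹)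
  refine h2.congr (Eventually.of_forall fun x => ?_)
  rw [normalPDF_eq]

lemma integral_normalPDF : ∫ x, normalPDF x = 1 := by
  have h := integral_gaussian (1/2 : ℝ)
  have h2 : ∫ x : ℝ, Real.exp (-(1/2) * x ^ 2) = Real.sqrt (2 * Real.pi) := by
    rw [h]; congr 1; rw [div_div_eq_mul_div, div_eq_iff (by norm_num)]; ring
  have : ∫ x, normalPDF x = (Real.sqrt (2 * Real.pi))⁻¹ * ∫ x : ℝ, Real.exp (-(1/2) * x ^ 2) := by
    simp_rw [normalPDF_eq]; exact integral_const_mul _ _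
  rw [this, h2, inv_mul_cancel₀]
  positivity

lemma normalPDF_neg (x : ℝ) : normalPDF (-x) = normalPDF x := by simp [normalPDF]

lemma normalCDF_nonneg (x : ℝ) : 0 ≤ normalCDF x :=
  setIntegral_nonneg measurableSet_Iic (fun t _ => normalPDF_nonneg t)

lemma normalCDF_mono : Monotone normalCDF := by
  intro a b hab
  exact setIntegral_mono_set integrable_normalPDF.integrableOn
    (Eventually.of_forall fun t => normalPDF_nonneg t)
    (HasSubset.Subset.eventuallyLE (Iic_subset_Iic.2 hab))

lemma normalCDF_add_neg (x : ℝ) : normalCDF x + normalCDF (-x) = 1 := by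
  have h1 : normalCDF (-x) = ∫ t in Ioi x, normalPDF t := by
    unfold normalCDF
    have := integral_comp_neg_Iic (-x) normalPDF
    simp only [normalPDF_neg, neg_neg] at this
    rw [this]
  rw [normalCDF, h1, ← integral_normalPDF]
  rw [← setIntegral_union (Iic_disjoint_Ioi le_rfl) measurableSet_Ioi
    integrable_normalPDF.integrableOn integrable_normalPDF.integrableOn, Iic_union_Ioi]
  simp

lemma normalCDF_le_one (x : ℝ) : normalCDF x ≤ 1 := by
  have := normalCDF_add_neg x
  have := normalCDF_nonneg (-x)
  linarith

lemma hasDerivAt_normalCDF (x : ℝ) : HasDerivAt normalCDF (normalPDF x) x := by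
  have key : ∀ y : ℝ, normalCDF y = normalCDF 0 + ∫ t in (0:ℝ)..y, normalPDF t := by
    intro y
    have := intervalIntegral.integral_Iic_sub_Iic (f := normalPDF) (μ := volume)
      integrable_normalPDF.integrableOn integrable_normalPDF.integrableOn (a := 0) (b := y)
    unfold normalCDF
    linarith
  have hd : HasDerivAt (fun y => normalCDF 0 + ∫ t in (0:ℝ)..y, normalPDF t) (normalPDF x) x := by
    refine HasDerivAt.const_add _ ?_
    refine intervalIntegral.integral_hasDerivAt_right
      integrable_normalPDF.intervalIntegrable
      integrable_normalPDF.aestronglyMeasurable.stronglyMeasurableAtFilter ?_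
    exact (Continuous.continuousAt (by unfold normalPDF; continuity))
  exact hd.congr_of_eventuallyEq (Eventually.of_forall key) -- might need funext order

lemma hasDerivAt_normalPDF (x : ℝ) : HasDerivAt normalPDF (-x * normalPDF x) x := by
  have h1 : HasDerivAt (fun y : ℝ => -(y ^ 2) / 2) (-x) x := by
    have : HasDerivAt (fun y : ℝ => -(y ^ 2) / 2) (-(2 * x ^ 1) / 2) x := by
      exact (((hasDerivAt_pow 2 x).neg).div_const 2)
    convert this using 1; ring
  have h2 := (h1.exp).const_mul ((Real.sqrt (2 * Real.pi))⁻¹)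
  have : HasDerivAt normalPDF ((Real.sqrt (2 * Real.pi))⁻¹ * (Real.exp (-(x ^ 2) / 2) * (-x))) x := h2
  convert this using 1
  unfold normalPDF; ring

lemma hasDerivAt_tau (x : ℝ) : HasDerivAt tau (normalCDF x) x := by
  have h1 := ((hasDerivAt_id x).mul (hasDerivAt_normalCDF x)).add (hasDerivAt_normalPDF x)
  have : HasDerivAt tau (1 * normalCDF x + x * normalPDF x + -x * normalPDF x) x := h1
  convert this using 1
  ring

lemma tau_mono : Monotone tau := by
  have : ∀ x : ℝ, 0 ≤ normalCDF x := normalCDF_nonneg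
  exact monotone_of_deriv_nonneg (fun x => (hasDerivAt_tau x).differentiableAt)
    (fun x => by rw [(hasDerivAt_tau x).deriv]; exact this x)

lemma integral_id_mul_normalPDF (x : ℝ) : ∫ t in Iic x, -t * normalPDF t = normalPDF x := by
  have hderiv : ∀ t ∈ Iic x, HasDerivAt normalPDF (-t * normalPDF t) t :=
    fun t _ => hasDerivAt_normalPDF t
  have hint : IntegrableOn (fun t => -t * normalPDF t) (Iic x) := by
    have : Integrable (fun t : ℝ => t * Real.exp (-(1/2) * t ^ 2)) :=
      integrable_mul_exp_neg_mul_sq (by norm_num)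
    have h2 := (this.const_mul (-(Real.sqrt (2 * Real.pi))⁻¹)).integrableOn (s := Iic x)
    refine h2.congr_fun (fun t _ => ?_) measurableSet_Iic
    rw [normalPDF_eq]; ring
  have hlim : Tendsto normalPDF atBot (nhds 0) := by
    have h2 : Tendsto (fun t : ℝ => -(t ^ 2) / 2) atBot atBot := by
      refine tendsto_atBot_mono' atBot ?_ (tendsto_id (α := ℝ))
      filter_upwards [Iic_mem_atBot (-2 : ℝ)] with t ht
      simp only [mem_Iic] at ht
      simp only [id]
      nlinarith
    have h3 : Tendsto (fun t : ℝ => Real.exp (-(t ^ 2) / 2)) atBot (nhds 0) :=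
      Real.tendsto_exp_atBot.comp h2
    have h4 := h3.const_mul ((Real.sqrt (2 * Real.pi))⁻¹)
    rw [mul_zero] at h4
    exact h4
  have := integral_Iic_of_hasDerivAt_of_tendsto' hderiv hint hlim
  rw [this, sub_zero]

lemma integrableOn_neg_id_mul_normalPDF (x : ℝ) :
    IntegrableOn (fun t => -t * normalPDF t) (Iic x) := by
  have : Integrable (fun t : ℝ => t * Real.exp (-(1/2) * t ^ 2)) :=
    integrable_mul_exp_neg_mul_sq (by norm_num)
  have h2 := (this.const_mul (-(Real.sqrt (2 * Real.pi))⁻¹)).integrableOn (s := Iic x)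
  refine h2.congr_fun (fun t _ => ?_) measurableSet_Iic
  rw [normalPDF_eq]; ring

lemma tau_nonneg (x : ℝ) : 0 ≤ tau x := by
  rcases le_or_gt 0 x with hx | hx
  · have := normalCDF_nonneg x
    have := normalPDF_nonneg x
    unfold tau; nlinarith
  · have key : (-x) * normalCDF x ≤ normalPDF x := by
      have h1 : (-x) * normalCDF x = ∫ t in Iic x, -x * normalPDF t := by
        rw [normalCDF, ← integral_const_mul]
      rw [h1, ← integral_id_mul_normalPDF x]
      refine setIntegral_mono_on (integrable_normalPDF.integrableOn.const_mul _)
        (integrableOn_neg_id_mul_normalPDF x) measurableSet_Iic (fun t ht => ?_)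
      simp only [mem_Iic] at ht
      have := normalPDF_nonneg t
      nlinarith
    unfold tau; nlinarith

lemma tau_sub (x : ℝ) : tau x - tau (-x) = x := by
  unfold tau
  rw [normalPDF_neg]
  have h2 : x * (normalCDF x + normalCDF (-x)) = x * 1 := by rw [normalCDF_add_neg x]
  ring_nf at h2 ⊢
  linarith

lemma le_tau (x : ℝ) : x ≤ tau x := by
  have h1 := tau_nonneg (-x)
  have h2 := tau_sub x
  linarith

lemma hasDerivAt_tang (y₀ z : ℝ) :
    HasDerivAt (fun z => tau z - normalCDF y₀ * z) (normalCDF z - normalCDF y₀) z := by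
  have h := (hasDerivAt_tau z).sub ((hasDerivAt_id z).const_mul (normalCDF y₀))
  exact h.congr_deriv (by ring)

lemma tau_tangent {y₀ y : ℝ} (h : y₀ ≤ y) :
    tau y₀ + normalCDF y₀ * (y - y₀) ≤ tau y := by
  set g : ℝ → ℝ := fun z => tau z - normalCDF y₀ * z with hg
  have hmono : MonotoneOn g (Ici y₀) := by
    refine monotoneOn_of_deriv_nonneg (convex_Ici y₀) ?_ ?_ ?_
    · have hdiff : Differentiable ℝ g := fun z => (hasDerivAt_tang y₀ z).differentiableAt
      exact hdiff.continuous.continuousOn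
    · intro z _
      exact (hasDerivAt_tang y₀ z).differentiableAt.differentiableWithinAt
    · intro z hz
      rw [(hasDerivAt_tang y₀ z).deriv]
      rw [interior_Ici] at hz
      have := normalCDF_mono (le_of_lt hz)
      linarith
  have hle := hmono self_mem_Ici h h
  simp only [hg] at hle
  linarith

lemma normalPDF_le_one (x : ℝ) : normalPDF x ≤ 1 := by
  unfold normalPDF
  have h1 : Real.exp (-(x ^ 2) / 2) ≤ 1 := by
    rw [show (1:ℝ) = Real.exp 0 by simp]
    apply Real.exp_le_exp.mpr
    nlinarith [sq_nonneg x]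
  have h2 : (1:ℝ) ≤ Real.sqrt (2 * Real.pi) := by
    rw [show (1:ℝ) = Real.sqrt 1 by simp]
    apply Real.sqrt_le_sqrt
    nlinarith [Real.pi_gt_three]
  have h3 : (Real.sqrt (2 * Real.pi))⁻¹ ≤ 1 := by
    rw [inv_le_one_iff₀]; right; exact h2
  nlinarith [Real.exp_pos (-(x ^ 2) / 2)]

lemma tau_pos {c : ℝ} (hc : 0 < c) : 0 < tau c := by
  have h1 := normalPDF_pos c
  have h2 := normalCDF_nonneg c
  unfold tau; nlinarith

lemma max_le_tau (x : ℝ) : max x 0 ≤ tau x := max_le (le_tau x) (tau_nonneg x)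

lemma tau_le (x : ℝ) : tau x ≤ max x 0 + 1 := by
  have h1 := normalCDF_nonneg x
  have h2 := normalCDF_le_one x
  have h3 := normalPDF_le_one x
  have h4 : x * normalCDF x ≤ max x 0 := by
    rcases le_or_gt 0 x with hx | hx
    · calc x * normalCDF x ≤ x * 1 := by nlinarith
        _ ≤ max x 0 := by simpa using le_max_left x 0
    · calc x * normalCDF x ≤ 0 := by nlinarith
        _ ≤ max x 0 := le_max_right _ _
  unfold tau; linarith

lemma key_lemma {c a : ℝ} (hc : 0 < c) (ha : 0 ≤ a) :
    tau (-c) / tau c * a ≤ tau (a - c) := by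
  have htc := tau_pos hc
  have htnc := tau_nonneg (-c)
  set q := tau (-c) / tau c with hq
  have hqt : q * tau c = tau (-c) := by
    rw [hq, div_mul_cancel₀ _ htc.ne']
  have hq0 : 0 ≤ q := div_nonneg htnc htc.le
  rcases le_or_gt a (tau c) with hcase | hcase
  · -- tangent at -c
    have htang : tau (-c) + normalCDF (-c) * a ≤ tau (a - c) := by
      have := tau_tangent (y₀ := -c) (y := a - c) (by linarith)
      calc tau (-c) + normalCDF (-c) * a
          = tau (-c) + normalCDF (-c) * ((a - c) - (-c)) := by ring
        _ ≤ tau (a - c) := this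
    have hPhi := normalCDF_nonneg (-c)
    rcases le_or_gt q (normalCDF (-c)) with hsub | hsub
    · nlinarith
    · have : (q - normalCDF (-c)) * a ≤ (q - normalCDF (-c)) * tau c := by
        apply mul_le_mul_of_nonneg_left hcase (by linarith)
      nlinarith
  · -- a ≥ tau c, use tau(a-c) ≥ a - c
    have h1 : a - c ≤ tau (a - c) := le_tau _
    have h2 : tau (-c) = tau c - c := by have := tau_sub c; linarith
    -- q*a = a - c*a/tau c ≤ a - c
    have h3 : q * a * tau c = (tau c - c) * a := by rw [← h2, ← hqt]; ring
    nlinarith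


end AuxTau

/-- Two-sided bound on the expected improvement in terms of
`τ(x) = xΦ(x) + φ(x)`: with `I = s·max(t,0)` and `EI = σsτ(u/σ)` (for `s > 0`; `EI = I` for
`s = 0`), `max(I − Rs, (τ(−R/σ)/τ(R/σ))·I) ≤ EI ≤ I + (R + σ)s` whenever `|u − t| ≤ R`. -/
theorem statement15 (R σ s t u : ℝ) (hR : 0 < R) (hσ : 0 < σ) (hs : 0 ≤ s)
    (hut : |u - t| ≤ R) :
    max (s * max t 0 - R * s) (tau (-R / σ) / tau (R / σ) * (s * max t 0)) ≤
        (if 0 < s then σ * s * tau (u / σ) else s * max t 0) ∧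
      (if 0 < s then σ * s * tau (u / σ) else s * max t 0) ≤ s * max t 0 + (R + σ) * s := by
  rcases abs_le.mp hut with ⟨hu1, hu2⟩
  have hc : 0 < R / σ := div_pos hR hσ
  have hq0 : 0 ≤ tau (-R / σ) / tau (R / σ) := by
    rw [neg_div]
    exact div_nonneg (tau_nonneg _) (tau_pos hc).le
  by_cases hspos : 0 < s
  · simp only [if_pos hspos]
    have hmain : ∀ goal : Prop, goal = goal := fun _ => rfl
    -- core bounds on σ * tau (u/σ)
    have hub : σ * tau (u / σ) ≤ max t 0 + (R + σ) := by
      have h1 : tau (u / σ) ≤ max (u / σ) 0 + 1 := tau_le _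
      have h2 : σ * max (u / σ) 0 = max u 0 := by
        rw [mul_max_of_nonneg _ _ hσ.le, mul_div_cancel₀ _ (ne_of_gt hσ), mul_zero]
      have h3 : max u 0 ≤ max t 0 + R := by
        rcases le_or_gt u 0 with h | h
        · rw [max_eq_right h]
          have := le_max_right t 0
          linarith
        · rw [max_eq_left h.le]
          calc u ≤ t + R := by linarith
            _ ≤ max t 0 + R := by gcongr; exact le_max_left _ _
      nlinarith
    have hlb1 : max t 0 - R ≤ σ * tau (u / σ) := by
      have h1 : max (u / σ) 0 ≤ tau (u / σ) := max_le_tau _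
      have h2 : σ * max (u / σ) 0 = max u 0 := by
        rw [mul_max_of_nonneg _ _ hσ.le, mul_div_cancel₀ _ (ne_of_gt hσ), mul_zero]
      have h3 : max t 0 - R ≤ max u 0 := by
        rcases le_or_gt t 0 with h | h
        · rw [max_eq_right h]
          have := le_max_right u 0; linarith
        · rw [max_eq_left h.le]
          calc t - R ≤ u := by linarith
            _ ≤ max u 0 := le_max_left _ _
      nlinarith
    have hlb2 : tau (-R / σ) / tau (R / σ) * max t 0 ≤ σ * tau (u / σ) := by
      rcases le_or_gt t 0 with h | h
      · rw [max_eq_right h]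
        have := tau_nonneg (u / σ)
        nlinarith
      · rw [max_eq_left h.le]
        have hkey : tau (-(R/σ)) / tau (R / σ) * (t / σ) ≤ tau (t / σ - R / σ) :=
          key_lemma hc (by positivity)
        have hmono : tau (t / σ - R / σ) ≤ tau (u / σ) := by
          apply tau_mono
          rw [div_sub_div_same, div_le_div_iff_of_pos_right hσ] -- maybe wrong name
          linarith
        rw [neg_div]
        have := mul_le_mul_of_nonneg_left (hkey.trans hmono) hσ.le
        calc tau (-(R / σ)) / tau (R / σ) * t
            = σ * (tau (-(R/σ)) / tau (R / σ) * (t / σ)) := by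
              rw [mul_comm σ]
              rw [mul_assoc, div_mul_cancel₀ _ (ne_of_gt hσ)]
          _ ≤ σ * tau (u / σ) := this
    constructor
    · apply max_le
      · nlinarith
      · have := mul_le_mul_of_nonneg_left hlb2 hs
        calc tau (-R / σ) / tau (R / σ) * (s * max t 0)
            = s * (tau (-R / σ) / tau (R / σ) * max t 0) := by ring
          _ ≤ s * (σ * tau (u / σ)) := this
          _ = σ * s * tau (u / σ) := by ring
    · have := mul_le_mul_of_nonneg_left hub hs
      nlinarith
  · have hs0 : s = 0 := le_antisymm (not_lt.mp hspos) hs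
    subst hs0
    simp only [if_neg hspos]
    constructor
    · apply max_le <;> simp
    · simp

end EIPaper
end
end

section
/- Let (x_n) be an i.i.d. sequence of random variables distributed uniformly over X = [0,1]^d, and define the mesh norm h_n = sup_{x ∈ X} min_{i=1,…,n} ‖x − x_i‖. Then for every γ > 0 there exist constants C > 0 and C' > 0 such that for all n ≥ 2, P(h_n > C (n/log n)^{−1/d}) ≤ C' n^{−γ}. -/
open MeasureTheory Matrix Filter
open scoped FourierTransform ENNReal NNReal Topology

noncomputable section

namespace EIPaper

variable {d : ℕ}

variable (K : Rd d → ℝ)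

lemma box_eq {d : ℕ} (a b : Fin d → ℝ) :
    {y : Rd d | ∀ i, y i ∈ Set.Icc (a i) (b i)}
      = (MeasurableEquiv.toLp 2 (Fin d → ℝ)).symm ⁻¹'
          (Set.univ.pi fun i => Set.Icc (a i) (b i)) := by
  ext y
  simp only [Set.mem_preimage, Set.mem_univ_pi, Set.mem_setOf_eq]
  exact Iff.rfl

lemma measurableSet_box {d : ℕ} (a b : Fin d → ℝ) :
    MeasurableSet {y : Rd d | ∀ i, y i ∈ Set.Icc (a i) (b i)} := by
  rw [box_eq]
  exact (MeasurableEquiv.measurable _) (MeasurableSet.univ_pi fun i => measurableSet_Icc)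

lemma volume_box {d : ℕ} (a b : Fin d → ℝ) :
    volume {y : Rd d | ∀ i, y i ∈ Set.Icc (a i) (b i)}
      = ∏ i, ENNReal.ofReal (b i - a i) := by
  rw [box_eq, (EuclideanSpace.volume_preserving_symm_measurableEquiv_toLp (Fin d)).measure_preimage
      ((MeasurableSet.univ_pi fun i => measurableSet_Icc).nullMeasurableSet)]
  rw [volume_pi_pi]
  simp [Real.volume_Icc]

set_option maxHeartbeats 2000000

/-- Mesh norm of i.i.d. uniform samples on `[0,1]^d`: for every `γ > 0` there
are `C, C' > 0` with `P(h_n > C (n/log n)^{−1/d}) ≤ C' n^{−γ}` for all `n ≥ 2`. -/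
theorem statement19 {d : ℕ} (hd : 0 < d) {Ω : Type*} [MeasurableSpace Ω] (P : Measure Ω)
    [IsProbabilityMeasure P] (x : ℕ → Ω → Rd d) (hmeas : ∀ n, Measurable (x n))
    (hindep : ProbabilityTheory.iIndepFun x P)
    (hunif : ∀ n, Measure.map (x n) P =
      volume.restrict {y : Rd d | ∀ i, y i ∈ Set.Icc (0 : ℝ) 1})
    (γ : ℝ) (hγ : 0 < γ) :
    ∃ C C' : ℝ, 0 < C ∧ 0 < C' ∧ ∀ n : ℕ, 2 ≤ n →
      P {ω | C * ((n : ℝ) / Real.log n) ^ (-(1 / (d : ℝ))) <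
          sSup ((fun ytgt => sInf ((fun i => dist ytgt (x i ω)) '' Set.Iio n)) ''
            {y : Rd d | ∀ i, y i ∈ Set.Icc (0 : ℝ) 1})} ≤
        ENNReal.ofReal (C' * (n : ℝ) ^ (-γ)) := by
  classical
  have hdR : (0:ℝ) < d := by exact_mod_cast hd
  have hdR1 : (1:ℝ) ≤ d := by exact_mod_cast hd
  have hdne : (d:ℝ) ≠ 0 := ne_of_gt hdR
  have hsd : 0 < Real.sqrt d := Real.sqrt_pos.mpr hdR
  set cube : Set (Rd d) := {y : Rd d | ∀ i, y i ∈ Set.Icc (0 : ℝ) 1} with hcube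
  set β : ℝ := γ + 1 with hβ
  have hβ1 : (1:ℝ) ≤ β := by simp [hβ]; linarith
  have hβ0 : (0:ℝ) < β := by linarith
  set N0 : ℕ := max 3 ⌈(2^(d+1) * β)^2⌉₊ with hN0
  have hN03 : 3 ≤ N0 := le_max_left _ _
  have hN00 : (0:ℝ) < N0 := by
    have : (3:ℝ) ≤ N0 := by exact_mod_cast hN03
    linarith
  have hC'1 : (1:ℝ) ≤ (N0:ℝ) ^ γ := by
    calc (1:ℝ) = (N0:ℝ) ^ (0:ℝ) := (Real.rpow_zero _).symm
    _ ≤ (N0:ℝ) ^ γ := Real.rpow_le_rpow_of_exponent_le (by exact_mod_cast le_trans (by norm_num) hN03) hγ.le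
  refine ⟨2 * Real.sqrt d * β, (N0:ℝ) ^ γ, by positivity, by positivity, ?_⟩
  intro n hn
  have hn0 : (0:ℝ) < n := by
    have : (2:ℝ) ≤ n := by exact_mod_cast hn
    linarith
  by_cases hbig : N0 ≤ n
  swap
  · -- small n : bound probability by 1
    refine le_trans prob_le_one ?_
    rw [show (1:ℝ≥0∞) = ENNReal.ofReal 1 by simp]
    apply ENNReal.ofReal_le_ofReal
    have hle : (n:ℝ) ≤ N0 := by exact_mod_cast le_of_not_ge hbig
    have h1 : (n:ℝ) ^ γ ≤ (N0:ℝ) ^ γ := Real.rpow_le_rpow hn0.le hle hγ.le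
    have h2 : 0 < (n:ℝ) ^ γ := Real.rpow_pos_of_pos hn0 γ
    rw [Real.rpow_neg hn0.le, ← div_eq_mul_inv, le_div_iff₀ h2, one_mul]
    exact h1
  · -- large n
    have hn3 : 3 ≤ n := le_trans hN03 hbig
    have hlog1 : 1 < Real.log n := by
      have h3 : (3:ℝ) ≤ n := by exact_mod_cast hn3
      have he : Real.exp 1 < 3 := by
        have := Real.exp_one_lt_d9; linarith
      calc (1:ℝ) = Real.log (Real.exp 1) := (Real.log_exp 1).symm
        _ < Real.log n := Real.log_lt_log (Real.exp_pos 1) (lt_of_lt_of_le he h3)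
    have hlogpos : 0 < Real.log n := lt_trans one_pos hlog1
    set L : ℝ := Real.log n with hL
    set z : ℝ := n / (β * L) with hz
    have hzpos : 0 < z := by positivity
    have hsq : (2^(d+1) * β)^2 ≤ (n:ℝ) := by
      have h1 : (⌈(2^(d+1)*β)^2⌉₊ : ℕ) ≤ n := le_trans (le_max_right _ _) hbig
      calc (2^(d+1)*β)^2 ≤ (⌈(2^(d+1)*β)^2⌉₊ : ℝ) := Nat.le_ceil _
        _ ≤ n := by exact_mod_cast h1
    have hs0 : 0 < Real.sqrt n := Real.sqrt_pos.mpr hn0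
    have hsqrt : 2^(d+1) * β ≤ Real.sqrt n := by
      have h0 : (0:ℝ) ≤ 2^(d+1) * β := by positivity
      calc 2^(d+1)*β = Real.sqrt ((2^(d+1)*β)^2) := (Real.sqrt_sq h0).symm
        _ ≤ Real.sqrt n := Real.sqrt_le_sqrt hsq
    have hlogle : L ≤ 2 * Real.sqrt n := by
      have h1 : Real.log (Real.sqrt n) ≤ Real.sqrt n - 1 :=
        Real.log_le_sub_one_of_pos hs0
      rw [Real.log_sqrt hn0.le] at h1
      simp only [hL]
      linarith
    have hz2d : (2:ℝ)^d ≤ z := by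
      have key : Real.sqrt n / (2*β) ≤ z := by
        rw [hz, div_le_div_iff₀ (by positivity) (by positivity)]
        calc Real.sqrt n * (β*L) = β * (Real.sqrt n * L) := by ring
          _ ≤ β * (Real.sqrt n * (2*Real.sqrt n)) := by
              apply mul_le_mul_of_nonneg_left _ hβ0.le
              exact mul_le_mul_of_nonneg_left hlogle hs0.le
          _ = 2*β*(Real.sqrt n * Real.sqrt n) := by ring
          _ = n * (2*β) := by rw [Real.mul_self_sqrt hn0.le]; ring
      have h2 : (2:ℝ)^d ≤ Real.sqrt n / (2*β) := by
        rw [le_div_iff₀ (by positivity)]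
        calc (2:ℝ)^d * (2*β) = 2^(d+1)*β := by ring
          _ ≤ Real.sqrt n := hsqrt
      linarith
    set t : ℝ := z ^ ((1:ℝ)/d) with ht
    have ht2 : (2:ℝ) ≤ t := by
      have h1 : ((2:ℝ)^d) ^ ((1:ℝ)/d) ≤ t :=
        Real.rpow_le_rpow (by positivity) hz2d (by positivity)
      calc (2:ℝ) = ((2:ℝ)^d)^((1:ℝ)/d) := by
            rw [← Real.rpow_natCast 2 d, ← Real.rpow_mul (by norm_num : (0:ℝ) ≤ 2),
              mul_one_div, div_self hdne, Real.rpow_one]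
        _ ≤ t := h1
    have htpos : 0 < t := lt_of_lt_of_le two_pos ht2
    set m : ℕ := ⌊t⌋₊ with hm
    have hm1 : 1 ≤ m := Nat.le_floor (by exact_mod_cast le_trans one_le_two ht2)
    have hmR : (0:ℝ) < m := by exact_mod_cast hm1
    have hmle : (m:ℝ) ≤ t := Nat.floor_le htpos.le
    have hmge : t/2 ≤ (m:ℝ) := by
      have h1 := Nat.lt_floor_add_one t
      rw [← hm] at h1
      linarith
    have hmd : (m:ℝ)^d ≤ z := by
      calc (m:ℝ)^d ≤ t^d := pow_le_pow_left₀ hmR.le hmle d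
        _ = z := by
          rw [ht, ← Real.rpow_natCast (z ^ ((1:ℝ)/d)) d, ← Real.rpow_mul hzpos.le,
            one_div_mul_cancel hdne, Real.rpow_one]
    set q : ℝ := ((m:ℝ)^d)⁻¹ with hq
    have hq0 : 0 < q := by positivity
    have hq1 : q ≤ 1 := by
      rw [hq]
      have h1m : (1:ℝ) ≤ (m:ℝ)^d := one_le_pow₀ (by exact_mod_cast hm1)
      exact inv_le_one_of_one_le₀ h1m
    -- the subcubes
    set A : (Fin d → Fin m) → Set (Rd d) := fun k =>
      {y : Rd d | ∀ i, y i ∈ Set.Icc (((k i : ℕ) : ℝ)/m) ((((k i : ℕ) : ℝ)+1)/m)} with hA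
    have hAmeas : ∀ k, MeasurableSet (A k) := fun k => measurableSet_box _ _
    have hAsub : ∀ k, A k ⊆ cube := by
      intro k y hy i
      obtain ⟨h1, h2⟩ := hy i
      have hki : ((k i : ℕ) : ℝ) + 1 ≤ m := by exact_mod_cast (k i).2
      constructor
      · exact le_trans (by positivity) h1
      · refine le_trans h2 ?_
        rw [div_le_one hmR]
        exact hki
    have hcubemeas : MeasurableSet cube := measurableSet_box (fun _ => (0:ℝ)) (fun _ => (1:ℝ))
    have hcubevol : volume cube = 1 := by
      rw [hcube, volume_box (fun _ => (0:ℝ)) (fun _ => (1:ℝ))]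
      simp
    set μ : Measure (Rd d) := volume.restrict cube with hμ
    have hμuniv : μ Set.univ = 1 := by
      rw [hμ, Measure.restrict_apply_univ, hcubevol]
    have hAvol : ∀ k, μ (A k) = ENNReal.ofReal q := by
      intro k
      rw [hμ, Measure.restrict_apply' hcubemeas, Set.inter_eq_left.mpr (hAsub k)]
      rw [hA, volume_box (fun i => ((k i : ℕ) : ℝ)/m) (fun i => (((k i : ℕ) : ℝ)+1)/m)]
      have heq : ∀ i : Fin d, (((k i : ℕ):ℝ)+1)/m - ((k i : ℕ):ℝ)/m = 1/(m:ℝ) := by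
        intro i; field_simp; ring
      simp_rw [heq]
      rw [Finset.prod_const, Finset.card_univ, Fintype.card_fin,
        ← ENNReal.ofReal_pow (by positivity)]
      congr 1
      rw [hq, one_div, inv_pow]
    haveI : IsFiniteMeasure μ := ⟨by rw [hμuniv]; exact ENNReal.one_lt_top⟩
    have hAcompl : ∀ k, μ (A k)ᶜ = ENNReal.ofReal (1 - q) := by
      intro k
      rw [measure_compl (hAmeas k) (measure_ne_top _ _), hμuniv, hAvol k,
        ← ENNReal.ofReal_one, ← ENNReal.ofReal_sub 1 hq0.le]
    set Bad : (Fin d → Fin m) → Set Ω := fun k => ⋂ i ∈ Finset.range n, x i ⁻¹' (A k)ᶜ with hBad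
    have hPBad : ∀ k, P (Bad k) = ENNReal.ofReal (1-q) ^ n := by
      intro k
      rw [hBad]
      rw [hindep.measure_inter_preimage_eq_mul (Finset.range n)
        (fun i _ => (hAmeas k).compl)]
      have h1 : ∀ i, P (x i ⁻¹' (A k)ᶜ) = ENNReal.ofReal (1-q) := by
        intro i
        rw [← Measure.map_apply (hmeas i) (hAmeas k).compl, hunif i]
        exact hAcompl k
      simp_rw [h1, Finset.prod_const, Finset.card_range]
    -- geometric bound
    have hCr : Real.sqrt d / m ≤ 2*Real.sqrt d*β * (((n:ℝ)/L) ^ (-(1/(d:ℝ)))) := by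
      set a : ℝ := (n:ℝ)/L with ha
      have hapos : 0 < a := by positivity
      have had : 0 < a ^ ((1:ℝ)/d) := Real.rpow_pos_of_pos hapos _
      have ht' : t = a ^ ((1:ℝ)/d) / β ^ ((1:ℝ)/d) := by
        rw [ht, show z = a/β by rw [hz, ha, div_div, mul_comm L β]]
        exact Real.div_rpow hapos.le hβ0.le _
      have hβd : β ^ ((1:ℝ)/d) ≤ β := by
        calc β ^ ((1:ℝ)/d) ≤ β ^ (1:ℝ) :=
          Real.rpow_le_rpow_of_exponent_le hβ1 (by rw [div_le_one hdR]; exact hdR1)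
        _ = β := Real.rpow_one β
      have hb0 : 0 < β ^ ((1:ℝ)/d) := Real.rpow_pos_of_pos hβ0 _
      have hkey : a ^ ((1:ℝ)/d) ≤ 2 * β * m := by
        have he : a ^ ((1:ℝ)/d) = t * β ^ ((1:ℝ)/d) := by
          rw [ht']; field_simp
        rw [he]
        calc t * β^((1:ℝ)/d) ≤ (2*(m:ℝ)) * β :=
          mul_le_mul (by linarith) hβd hb0.le (by positivity)
        _ = 2*β*m := by ring
      have hmain : Real.sqrt d * a^((1:ℝ)/d) ≤ (2*Real.sqrt d*β) * m := by
        calc Real.sqrt d * a^((1:ℝ)/d) ≤ Real.sqrt d * (2*β*m) :=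
          mul_le_mul_of_nonneg_left hkey (Real.sqrt_nonneg d)
        _ = (2*Real.sqrt d*β)*m := by ring
      rw [show -(1/(d:ℝ)) = -((1:ℝ)/d) by norm_num, Real.rpow_neg hapos.le,
        div_le_iff₀ hmR]
      have heq2 : 2*Real.sqrt d*β * (a^((1:ℝ)/d))⁻¹ * (m:ℝ)
          = ((2*Real.sqrt d*β)*m)/a^((1:ℝ)/d) := by ring
      rw [heq2, le_div_iff₀ had]
      linarith [hmain]
    -- inclusion into bad events
    have hincl : {ω | 2*Real.sqrt d*β * ((n:ℝ)/Real.log n) ^ (-(1/(d:ℝ))) <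
        sSup ((fun ytgt => sInf ((fun i => dist ytgt (x i ω)) '' Set.Iio n)) '' cube)}
        ⊆ ⋃ k, Bad k := by
      intro ω hω
      simp only [Set.mem_setOf_eq] at hω
      have hcube_ne : cube.Nonempty := ⟨0, fun i => ⟨le_refl 0, zero_le_one⟩⟩
      obtain ⟨s, hs, hlt⟩ := exists_lt_of_lt_csSup (hcube_ne.image _) hω
      obtain ⟨y, hy, rfl⟩ := hs
      have hd_lt : ∀ i, i < n →
          2*Real.sqrt d*β * ((n:ℝ)/Real.log n)^(-(1/(d:ℝ))) < dist y (x i ω) := by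
        intro i hi
        refine lt_of_lt_of_le hlt (csInf_le ?_ ?_)
        · exact ⟨0, by rintro v ⟨j, _, rfl⟩; exact dist_nonneg⟩
        · exact ⟨i, hi, rfl⟩
      set k : Fin d → Fin m := fun i =>
        ⟨min ⌊y i * m⌋₊ (m-1), lt_of_le_of_lt (min_le_right _ _) (Nat.sub_lt hm1 one_pos)⟩
        with hk
      have hyA : y ∈ A k := by
        intro i
        obtain ⟨hy0, hy1⟩ := hy i
        have hmul0 : (0:ℝ) ≤ y i * m := by positivity
        constructor
        · rw [div_le_iff₀ hmR]
          calc (((k i : ℕ)) : ℝ) ≤ (⌊y i * m⌋₊ : ℝ) := by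
                exact_mod_cast min_le_left ⌊y i * m⌋₊ (m-1)
            _ ≤ y i * m := Nat.floor_le hmul0
        · rw [le_div_iff₀ hmR]
          rcases le_or_gt (⌊y i * m⌋₊) (m-1) with hcase | hcase
          · have hkv : (k i : ℕ) = ⌊y i * m⌋₊ := min_eq_left hcase
            have h2 := Nat.lt_floor_add_one (y i * m)
            rw [← hkv] at h2
            exact h2.le
          · have hkv : (k i : ℕ) = m - 1 := min_eq_right hcase.le
            have he : ((k i : ℕ) : ℝ) + 1 = m := by
              rw [hkv, Nat.cast_sub hm1]; ring
            rw [he]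
            calc y i * m ≤ 1 * m := by
                  exact mul_le_mul_of_nonneg_right hy1 hmR.le
              _ = m := one_mul _
      refine Set.mem_iUnion.mpr ⟨k, ?_⟩
      simp only [hBad, Set.mem_iInter, Set.mem_preimage, Set.mem_compl_iff, Finset.mem_range]
      intro i hi hxiA
      have hclose : dist y (x i ω) ≤ Real.sqrt d / m := by
        rw [EuclideanSpace.dist_eq]
        have hbound : ∀ c : Fin d, dist (y c) (x i ω c) ^ 2 ≤ (1/(m:ℝ))^2 := by
          intro c
          obtain ⟨a1, a2⟩ := hyA c
          obtain ⟨b1, b2⟩ := hxiA c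
          have hdiff : ((((k c : ℕ)):ℝ)+1)/m - (((k c : ℕ)):ℝ)/m = 1/(m:ℝ) := by field_simp; ring
          have habs : |y c - x i ω c| ≤ 1/(m:ℝ) := by
            rw [abs_le]; constructor <;> [linarith; linarith]
          rw [Real.dist_eq]
          exact pow_le_pow_left₀ (abs_nonneg _) habs 2
        calc Real.sqrt (∑ c, dist (y c) (x i ω c)^2)
            ≤ Real.sqrt (∑ _c : Fin d, (1/(m:ℝ))^2) :=
              Real.sqrt_le_sqrt (Finset.sum_le_sum fun c _ => hbound c)
          _ = Real.sqrt ((d:ℝ) * (1/(m:ℝ))^2) := by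
              rw [Finset.sum_const, Finset.card_univ, Fintype.card_fin, nsmul_eq_mul]
          _ = Real.sqrt d * (1/(m:ℝ)) := by
              rw [Real.sqrt_mul hdR.le, Real.sqrt_sq (by positivity)]
          _ = Real.sqrt d / m := by ring
      have h1 := hd_lt i hi
      rw [hL] at hCr
      linarith
    -- final chain
    have hreal : (m:ℝ)^d * (1-q)^n ≤ (n:ℝ)^(-γ) := by
      have h1 : (1-q)^n ≤ Real.exp (-((n:ℝ)*q)) := by
        calc (1-q)^n ≤ (Real.exp (-q))^n :=
          pow_le_pow_left₀ (by linarith) (by linarith [Real.add_one_le_exp (-q)]) n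
        _ = Real.exp (-((n:ℝ)*q)) := by
            rw [← Real.exp_nat_mul]; congr 1; ring
      have h2 : β * L ≤ (n:ℝ) * q := by
        have h3 : (n:ℝ)/z ≤ (n:ℝ) * ((m:ℝ)^d)⁻¹ := by
          rw [div_eq_mul_inv]
          exact mul_le_mul_of_nonneg_left (inv_anti₀ (by positivity) hmd) hn0.le
        have hnz : (n:ℝ)/z = β*L := by
          rw [hz]; field_simp
        rw [hq]; linarith
      have h3 : Real.exp (-((n:ℝ)*q)) ≤ (n:ℝ)^(-β) := by
        rw [Real.rpow_def_of_pos hn0]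
        apply Real.exp_le_exp.mpr
        have : Real.log n * -β = -(β * L) := by rw [hL]; ring
        rw [this]
        linarith
      have h4 : (m:ℝ)^d ≤ n := by
        refine le_trans hmd ?_
        rw [hz]
        apply div_le_self hn0.le
        nlinarith [hβ1, hlog1.le]
      calc (m:ℝ)^d * (1-q)^n ≤ (n:ℝ) * (n:ℝ)^(-β) :=
        mul_le_mul h4 (le_trans h1 h3) (pow_nonneg (by linarith) n) hn0.le
      _ = (n:ℝ)^(-γ) := by
          nth_rewrite 1 [← Real.rpow_one (n:ℝ)]
          rw [← Real.rpow_add hn0]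
          norm_num [hβ]
    refine le_trans (measure_mono hincl) ?_
    refine le_trans (measure_iUnion_le _) ?_
    rw [tsum_fintype]
    simp_rw [hPBad]
    rw [Finset.sum_const, Finset.card_univ, Fintype.card_fun, Fintype.card_fin,
      Fintype.card_fin, nsmul_eq_mul]
    have hcast : ((m^d : ℕ) : ℝ≥0∞) = ENNReal.ofReal ((m:ℝ)^d) := by
      rw [← ENNReal.ofReal_natCast (m^d)]
      congr 1
      push_cast
      ring
    rw [hcast, ← ENNReal.ofReal_pow (by linarith : (0:ℝ) ≤ 1 - q),
      ← ENNReal.ofReal_mul (by positivity)]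
    apply ENNReal.ofReal_le_ofReal
    have h5 : (0:ℝ) < (n:ℝ)^(-γ) := Real.rpow_pos_of_pos hn0 _
    calc (m:ℝ)^d * (1-q)^n ≤ (n:ℝ)^(-γ) := hreal
      _ ≤ (N0:ℝ)^γ * (n:ℝ)^(-γ) := le_mul_of_one_le_left h5.le hC'1


end EIPaper
end
end
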